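/- Let V₁, V₂ be vector spaces with nondegenerate symmetric bilinear forms, and R ⊆ V₂ × V̄₁ a Lagrangian subspace (for the form ⟨(y₂,y₁),(y₂',y₁')⟩ = ⟨y₂,y₂'⟩₂ − ⟨y₁,y₁'⟩₁). Let E₁ ⊆ V₁, E₂ ⊆ V₂ be Lagrangian subspaces such that R ∩ (E₂ × E₁) is the graph of a linear map b: E₂ → E₁ (i.e., for every x₂ ∈ E₂ there is a unique x₁ ∈ E₁ with (x₂,x₁) ∈ R). Let F₂ ⊆ V₂ be a Lagrangian complement to E₂. Then the backward image F₁ = {x₁ ∈ V₁ : ∃ y₂ ∈ F₂, (y₂,x₁) ∈ R} is a Lagrangian subspace of V₁ complementary to E₁, and for each x₁ ∈ F₁ the element y₂ ∈ F₂ with (y₂,x₁) ∈ R is unique. -/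

import Mathlib

/-- The orthogonal complement of a subspace with respect to a bilinear form. -/
def orth {V : Type*} [AddCommGroup V] [Module ℝ V]
    (B : V →ₗ[ℝ] V →ₗ[ℝ] ℝ) (W : Submodule ℝ V) : Submodule ℝ V where
  carrier := {x | ∀ w ∈ W, B x w = 0}
  add_mem' := by
    intro a b ha hb w hw
    simp only [Set.mem_setOf_eq] at *
    rw [map_add, LinearMap.add_apply, ha w hw, hb w hw, add_zero]
  zero_mem' := by intro w hw; simp
  smul_mem' := by
    intro c a ha w hw
    simp only [Set.mem_setOf_eq] at *
    rw [map_smul, LinearMap.smul_apply, ha w hw, smul_zero]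

lemma mem_orth_iff {V : Type*} [AddCommGroup V] [Module ℝ V]
    (B : V →ₗ[ℝ] V →ₗ[ℝ] ℝ) (W : Submodule ℝ V) (x : V) :
    x ∈ orth B W ↔ ∀ w ∈ W, B x w = 0 := Iff.rfl

/-- If the `B`-orthogonal of `W` is trivial, then `W` is everything (finite dim.). -/
lemma orth_triv_imp_top {V : Type*} [AddCommGroup V] [Module ℝ V] [FiniteDimensional ℝ V]
    (B : V →ₗ[ℝ] V →ₗ[ℝ] ℝ) (W : Submodule ℝ V)
    (h : ∀ x : V, (∀ w ∈ W, B x w = 0) → x = 0) : W = ⊤ := by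
  let φ : V →ₗ[ℝ] Module.Dual ℝ W :=
    { toFun := fun x => (B x).domRestrict W
      map_add' := by intro x y; ext w; simp
      map_smul' := by intro c x; ext w; simp }
  have hker : LinearMap.ker φ = ⊥ := by
    rw [LinearMap.ker_eq_bot']
    intro x hx
    apply h
    intro w hw
    have := congrArg (fun f => f ⟨w, hw⟩) hx
    simpa [φ] using this
  apply Submodule.eq_top_of_finrank_eq
  have h1 := LinearMap.finrank_range_add_finrank_ker φ
  rw [hker, finrank_bot, add_zero] at h1
  have h2 : Module.finrank ℝ (LinearMap.range φ) ≤ Module.finrank ℝ (Module.Dual ℝ W) :=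
    Submodule.finrank_le _
  have h3 : Module.finrank ℝ (Module.Dual ℝ W) = Module.finrank ℝ W := Subspace.dual_finrank_eq
  have h4 : Module.finrank ℝ W ≤ Module.finrank ℝ V := Submodule.finrank_le _
  omega

/-- Backward image of a Lagrangian complement under a linear Dirac
morphism: R ⊆ V₂ × V̄₁ Lagrangian (for B₂ ⊖ B₁), E₁, E₂ Lagrangian with R ∩ (E₂ × E₁) the
graph of a map E₂ → E₁, and F₂ a Lagrangian complement of E₂.  Then the backward image
F₁ = {x₁ : ∃ y₂ ∈ F₂, (y₂,x₁) ∈ R} is a Lagrangian subspace complementary to E₁, and the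
element y₂ ∈ F₂ related to a given x₁ ∈ F₁ is unique. -/
theorem stmt19 (V₁ V₂ : Type*)
    [AddCommGroup V₁] [Module ℝ V₁] [FiniteDimensional ℝ V₁]
    [AddCommGroup V₂] [Module ℝ V₂] [FiniteDimensional ℝ V₂]
    (B₁ : V₁ →ₗ[ℝ] V₁ →ₗ[ℝ] ℝ)
    (h₁symm : ∀ x y : V₁, B₁ x y = B₁ y x)
    (h₁nondeg : ∀ x : V₁, (∀ y : V₁, B₁ x y = 0) → x = 0)
    (B₂ : V₂ →ₗ[ℝ] V₂ →ₗ[ℝ] ℝ)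
    (h₂symm : ∀ x y : V₂, B₂ x y = B₂ y x)
    (h₂nondeg : ∀ x : V₂, (∀ y : V₂, B₂ x y = 0) → x = 0)
    -- R is a Lagrangian subspace of V₂ × V̄₁
    (R : Submodule ℝ (V₂ × V₁))
    (hRLag : ∀ p : V₂ × V₁, p ∈ R ↔ ∀ q ∈ R, B₂ p.1 q.1 - B₁ p.2 q.2 = 0)
    -- E₁, E₂ Lagrangian
    (E₁ : Submodule ℝ V₁) (hE₁ : orth B₁ E₁ = E₁)
    (E₂ : Submodule ℝ V₂) (hE₂ : orth B₂ E₂ = E₂)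
    -- Dirac morphism condition: R ∩ (E₂ × E₁) is the graph of a map E₂ → E₁
    (hDirac : ∀ x₂ ∈ E₂, ∃! x₁ : V₁, x₁ ∈ E₁ ∧ (x₂, x₁) ∈ R)
    -- F₂ a Lagrangian complement to E₂
    (F₂ : Submodule ℝ V₂) (hF₂ : orth B₂ F₂ = F₂)
    (hc₁ : E₂ ⊓ F₂ = ⊥) (hc₂ : E₂ ⊔ F₂ = ⊤) :
    let F₁ : Set V₁ := {x₁ | ∃ y₂ ∈ F₂, (y₂, x₁) ∈ R}
    -- F₁ is Lagrangian …
    (∀ x₁ : V₁, x₁ ∈ F₁ ↔ ∀ z₁ ∈ F₁, B₁ x₁ z₁ = 0) ∧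
    -- … complementary to E₁ …
    (∀ x₁ ∈ F₁, x₁ ∈ E₁ → x₁ = 0) ∧
    (∀ x : V₁, ∃ a ∈ F₁, ∃ b ∈ E₁, x = a + b) ∧
    -- … and each x₁ ∈ F₁ is R-related to a unique y₂ ∈ F₂
    (∀ x₁ ∈ F₁, ∃! y₂ : V₂, y₂ ∈ F₂ ∧ (y₂, x₁) ∈ R) := by
  intro F₁
  -- basic Lagrangian pairings
  have hEE₁ : ∀ x ∈ E₁, ∀ y ∈ E₁, B₁ x y = 0 := by
    intro x hx y hy
    rw [← hE₁] at hx
    exact hx y hy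
  have hFF₂ : ∀ x ∈ F₂, ∀ y ∈ F₂, B₂ x y = 0 := by
    intro x hx y hy
    rw [← hF₂] at hx
    exact hx y hy
  have hRpair : ∀ p ∈ R, ∀ q ∈ R, B₂ p.1 q.1 = B₁ p.2 q.2 := by
    intro p hp q hq
    have := (hRLag p).mp hp q hq
    linarith
  -- the unique partner of 0 ∈ E₂ is 0
  have hzero : ∀ x₁ : V₁, x₁ ∈ E₁ → ((0 : V₂), x₁) ∈ R → x₁ = 0 := by
    intro x₁ hx₁ hR₁
    obtain ⟨w, -, hwuniq⟩ := hDirac 0 E₂.zero_mem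
    have h1 : x₁ = w := hwuniq x₁ ⟨hx₁, hR₁⟩
    have h2 : (0 : V₁) = w := hwuniq 0 ⟨E₁.zero_mem, R.zero_mem⟩
    rw [h1, ← h2]
  -- Key lemma: an element of E₁ orthogonal to F₁ is zero.
  have hkey : ∀ x₁ ∈ E₁, (∀ z₁ ∈ F₁, B₁ x₁ z₁ = 0) → x₁ = 0 := by
    intro x₁ hx₁ hperp
    apply hzero x₁ hx₁
    rw [hRLag]
    rintro ⟨z₂, z₁⟩ hq
    simp only [map_zero, LinearMap.zero_apply]
    have hz₂ : z₂ ∈ E₂ ⊔ F₂ := by rw [hc₂]; trivial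
    obtain ⟨e, he, f, hf, hef⟩ := Submodule.mem_sup.mp hz₂
    obtain ⟨e₁, ⟨he₁, heR⟩, -⟩ := hDirac e he
    have hfR : (f, z₁ - e₁) ∈ R := by
      have : (f, z₁ - e₁) = (z₂, z₁) - (e, e₁) := by
        simp only [Prod.ext_iff, Prod.snd_sub, Prod.fst_sub, ← hef]
        exact ⟨by abel, trivial⟩
      rw [this]
      exact R.sub_mem hq heR
    have hmemF₁ : z₁ - e₁ ∈ F₁ := ⟨f, hf, hfR⟩
    have h1 : B₁ x₁ e₁ = 0 := hEE₁ x₁ hx₁ e₁ he₁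
    have h2 : B₁ x₁ (z₁ - e₁) = 0 := hperp _ hmemF₁
    rw [map_sub] at h2
    linarith
  -- F₁ is isotropic
  have hiso : ∀ x₁ ∈ F₁, ∀ z₁ ∈ F₁, B₁ x₁ z₁ = 0 := by
    rintro x₁ ⟨y₂, hy₂, hyR⟩ z₁ ⟨w₂, hw₂, hwR⟩
    have := hRpair _ hyR _ hwR
    simp only at this
    rw [← this]
    exact hFF₂ y₂ hy₂ w₂ hw₂
  -- F₁ as a submodule
  set F₁s : Submodule ℝ V₁ :=
    Submodule.map (LinearMap.snd ℝ V₂ V₁) (R ⊓ Submodule.prod F₂ ⊤) with hF₁sdef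
  have hF₁mem : ∀ x₁ : V₁, x₁ ∈ F₁s ↔ x₁ ∈ F₁ := by
    intro x₁
    constructor
    · rintro ⟨⟨y₂, y₁⟩, ⟨hRm, hFm, -⟩, rfl⟩
      exact ⟨y₂, hFm, hRm⟩
    · rintro ⟨y₂, hF, hRm⟩
      exact ⟨(y₂, x₁), ⟨hRm, hF, trivial⟩, rfl⟩
  -- E₁ ⊔ F₁s = ⊤
  have htop : E₁ ⊔ F₁s = ⊤ := by
    apply orth_triv_imp_top B₁
    intro x hx
    have hxE : x ∈ E₁ := by
      rw [← hE₁]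
      intro w hw
      exact hx w (Submodule.mem_sup_left hw)
    apply hkey x hxE
    intro z hz
    exact hx z (Submodule.mem_sup_right ((hF₁mem z).mpr hz))
  have hsurj : ∀ x : V₁, ∃ a ∈ F₁, ∃ b ∈ E₁, x = a + b := by
    intro x
    have hx : x ∈ E₁ ⊔ F₁s := by rw [htop]; trivial
    obtain ⟨e, he, f, hf, hef⟩ := Submodule.mem_sup.mp hx
    exact ⟨f, (hF₁mem f).mp hf, e, he, by rw [← hef, add_comm]⟩
  refine ⟨?_, ?_, hsurj, ?_⟩
  · -- F₁ Lagrangian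
    intro x₁
    constructor
    · exact hiso x₁
    · intro hperp
      obtain ⟨a, ha, b, hb, hab⟩ := hsurj x₁
      have hb0 : b = 0 := by
        apply hkey b hb
        intro z hz
        have h1 : B₁ x₁ z = 0 := hperp z hz
        have h2 : B₁ a z = 0 := hiso a ha z hz
        rw [hab] at h1
        rw [map_add] at h1
        simp only [LinearMap.add_apply] at h1
        linarith
      rw [hab, hb0, add_zero]
      exact ha
  · -- F₁ ∩ E₁ = 0
    intro x₁ hx₁F hx₁E
    exact hkey x₁ hx₁E (fun z hz => hiso x₁ hx₁F z hz)
  · -- uniqueness of the F₂ witness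
    rintro x₁ ⟨y₂, hy₂, hyR⟩
    refine ⟨y₂, ⟨hy₂, hyR⟩, ?_⟩
    rintro w₂ ⟨hw₂, hwR⟩
    have hd : (w₂ - y₂, (0 : V₁)) ∈ R := by
      have : (w₂ - y₂, (0 : V₁)) = (w₂, x₁) - (y₂, x₁) := by simp
      rw [this]
      exact R.sub_mem hwR hyR
    have hdF : w₂ - y₂ ∈ F₂ := F₂.sub_mem hw₂ hy₂
    have hd0 : w₂ - y₂ = 0 := by
      apply h₂nondeg
      intro z
      have hz : z ∈ E₂ ⊔ F₂ := by rw [hc₂]; trivial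
      obtain ⟨e, he, f, hf, hef⟩ := Submodule.mem_sup.mp hz
      obtain ⟨e₁, ⟨he₁, heR⟩, -⟩ := hDirac e he
      have h1 : B₂ (w₂ - y₂) e = 0 := by
        have h := hRpair _ hd _ heR
        simpa using h
      have h2 : B₂ (w₂ - y₂) f = 0 := hFF₂ _ hdF f hf
      rw [← hef, map_add]
      rw [h1, h2, add_zero]
    exact sub_eq_zero.mp hd0
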